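/- Let X be a compact metrizable space equipped with its Borel σ-algebra, let R be a closed relation on X, and let μ be a finite Borel measure on X such that μ(K) ≤ μ(R†(K)) for every compact set K ⊆ X (note that R†(K) is compact, hence Borel). If A ⊆ X is such that both A and R†(A) are μ-null-measurable, then μ(A) ≤ μ(R†(A)) (measures computed in the completion of μ). -/
import Mathlib

open MeasureTheory Set

/-- Forward image of a set under a relation. -/
def relImg {X : Type*} (R : Set (X × X)) (A : Set X) : Set X :=
  {y | ∃ x ∈ A, (x, y) ∈ R}

/-- Backward image (adjoint image) of a set under a relation. -/
def relDag {X : Type*} (R : Set (X × X)) (A : Set X) : Set X :=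
  {x | ∃ y ∈ A, (x, y) ∈ R}

/-- Iterates of a relation: `R⁰` is the identity relation and
`R^{n+1} = {(x,z) : ∃ y, (x,y) ∈ R ∧ (y,z) ∈ R^n}`. -/
def relIter {X : Type*} (R : Set (X × X)) : ℕ → Set (X × X)
  | 0 => {p | p.1 = p.2}
  | n + 1 => {p | ∃ y, (p.1, y) ∈ R ∧ (y, p.2) ∈ relIter R n}

lemma relDag_mono {X : Type*} (R : Set (X × X)) {A B : Set X} (h : A ⊆ B) :
    relDag R A ⊆ relDag R B := fun x ⟨y, hy, hR⟩ => ⟨y, h hy, hR⟩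

/-- **Relation-theoretic form of the paper's Lemma 5.3**: the compact-set inequality
`μ(K) ≤ μ(R†(K))` upgrades, by inner regularity, to all `μ`-null-measurable sets `A`
with `R†(A)` also `μ`-null-measurable. -/
theorem backward_measure_inequality
    {X : Type*} [TopologicalSpace X] [CompactSpace X] [TopologicalSpace.MetrizableSpace X]
    [MeasurableSpace X] [BorelSpace X]
    (R : Set (X × X)) (hR : IsClosed R)
    (μ : Measure X) [IsFiniteMeasure μ]
    (hinv : ∀ K : Set X, IsCompact K → μ K ≤ μ (relDag R K))
    (A : Set X) (hA : NullMeasurableSet A μ) (hA' : NullMeasurableSet (relDag R A) μ) :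
    μ A ≤ μ (relDag R A) := by
  obtain ⟨B, hBA, hBm, hBeq⟩ := hA.exists_measurable_subset_ae_eq
  letI := TopologicalSpace.metrizableSpaceMetric X
  have h1 : μ A = μ B := (measure_congr hBeq).symm
  rw [h1, hBm.measure_eq_iSup_isCompact_of_ne_top (measure_ne_top μ B)]
  exact iSup₂_le fun K hK => iSup_le fun hKc =>
    (hinv K hKc).trans (measure_mono (relDag_mono R (hK.trans hBA)))
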